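/- arXiv:1211.1846 — 2 statements merged into one kernel-verified Lean document; each statement's English description precedes it below -/
import Mathlib

section
/- For α ∈ (0,1), (1/2)·∫_ℝ (1 − cos y)/|y|^(α+1) dy = Γ(1−α)·cos(πα/2)/α. -/
open MeasureTheory Real Set Filter

/-- Antiderivative of `(1 - cos x) * exp (-(t*x))`. -/
lemma aux_hasDeriv (t : ℝ) (ht : 0 < t) (x : ℝ) :
    HasDerivAt (fun x : ℝ => Real.exp (-(t*x)) *
        ((t * Real.cos x - Real.sin x)/(1+t^2) - 1/t))
      ((1 - Real.cos x) * Real.exp (-(t*x))) x := by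
  have h1 : HasDerivAt (fun x : ℝ => -(t*x)) (-t) x := by
    have := ((hasDerivAt_id x).const_mul t).neg; simp only [mul_one] at this; exact this
  have he : HasDerivAt (fun x : ℝ => Real.exp (-(t*x)))
      (Real.exp (-(t*x)) * (-t)) x := h1.exp
  have hc : HasDerivAt (fun x : ℝ => (t * Real.cos x - Real.sin x)/(1+t^2) - 1/t)
      ((t * (-Real.sin x) - Real.cos x)/(1+t^2)) x :=
    ((((Real.hasDerivAt_cos x).const_mul t).sub (Real.hasDerivAt_sin x)).div_const _).sub_const _
  have := he.mul hc
  refine this.congr_deriv ?_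
  have h2 : (1:ℝ) + t^2 ≠ 0 := by positivity
  field_simp
  ring

lemma aux_tendsto (t : ℝ) (ht : 0 < t) :
    Tendsto (fun x : ℝ => Real.exp (-(t*x)) *
        ((t * Real.cos x - Real.sin x)/(1+t^2) - 1/t)) atTop (nhds 0) := by
  have hpos : (0:ℝ) < 1 + t^2 := by positivity
  have hexp : Tendsto (fun x : ℝ => Real.exp (-(t*x))) atTop (nhds 0) := by
    have h' : Tendsto (fun x : ℝ => t * x) atTop atTop :=
      Tendsto.const_mul_atTop ht tendsto_id
    exact Real.tendsto_exp_atBot.comp (tendsto_neg_atTop_atBot.comp h')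
  have hb : ∀ x : ℝ, ‖Real.exp (-(t*x)) * ((t * Real.cos x - Real.sin x)/(1+t^2) - 1/t)‖
      ≤ ((t+1)/(1+t^2) + 1/t) * Real.exp (-(t*x)) := by
    intro x
    rw [Real.norm_eq_abs, abs_mul, abs_of_pos (Real.exp_pos _), mul_comm]
    refine mul_le_mul_of_nonneg_right ?_ (Real.exp_pos _).le
    have h1 : |t * Real.cos x - Real.sin x| ≤ t + 1 := by
      refine (abs_sub _ _).trans ?_
      rw [abs_mul, abs_of_pos ht]
      have := abs_cos_le_one x
      have := abs_sin_le_one x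
      nlinarith
    calc |(t * Real.cos x - Real.sin x)/(1+t^2) - 1/t|
        ≤ |(t * Real.cos x - Real.sin x)/(1+t^2)| + |1/t| := abs_sub _ _
      _ ≤ (t+1)/(1+t^2) + 1/t := by
          rw [abs_div, abs_of_pos hpos, abs_of_pos (by positivity : (0:ℝ) < 1/t)]
          exact add_le_add ((div_le_div_iff_of_pos_right hpos).mpr h1) le_rfl
  refine squeeze_zero_norm hb ?_
  simpa using hexp.const_mul ((t+1)/(1+t^2) + 1/t)

lemma aux_nonneg (t : ℝ) : ∀ x ∈ Ioi (0:ℝ), 0 ≤ (1 - Real.cos x) * Real.exp (-(t*x)) := by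
  intro x _
  have h := Real.cos_le_one x
  exact mul_nonneg (by linarith) (Real.exp_pos _).le

lemma lemA_int (t : ℝ) (ht : 0 < t) :
    IntegrableOn (fun x => (1 - Real.cos x) * Real.exp (-(t*x))) (Ioi 0) :=
  integrableOn_Ioi_deriv_of_nonneg' (fun x _ => aux_hasDeriv t ht x)
    (aux_nonneg t) (aux_tendsto t ht)

lemma lemA_val (t : ℝ) (ht : 0 < t) :
    ∫ x in Ioi (0:ℝ), (1 - Real.cos x) * Real.exp (-(t*x)) = 1/(t*(1+t^2)) := by
  have h := integral_Ioi_of_hasDerivAt_of_nonneg' (fun x _ => aux_hasDeriv t ht x)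
    (aux_nonneg t) (aux_tendsto t ht)
  rw [h]
  have h2 : (1:ℝ) + t^2 ≠ 0 := by positivity
  simp only [mul_zero, Real.exp_zero, Real.cos_zero, Real.sin_zero, mul_one, sub_zero, neg_zero]
  field_simp
  ring

/-- `∫_0^∞ e^{-rs} ds = 1/r`. -/
lemma int_exp_neg_mul (r : ℝ) (hr : 0 < r) :
    ∫ s in Ioi (0:ℝ), Real.exp (-(r*s)) = 1/r := by
  have h := integral_rpow_mul_exp_neg_mul_Ioi (zero_lt_one) hr
  simpa [Real.Gamma_one, Real.rpow_one] using h

/-- The key auxiliary integral `∫_0^∞ t^{α-1}/(1+t²) dt = Γ(α/2)Γ(1-α/2)/2`,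
proved by writing `1/(1+t²) = ∫_0^∞ e^{-s(1+t²)} ds` and applying Fubini. -/
lemma lemJ (α : ℝ) (hα : 0 < α) (hα1 : α < 1) :
    IntegrableOn (fun t : ℝ => t ^ (α-1) * (1+t^2)⁻¹) (Ioi 0) ∧
    ∫ t in Ioi (0:ℝ), t ^ (α-1) * (1+t^2)⁻¹
      = Real.Gamma (α/2) * Real.Gamma (1 - α/2) / 2 := by
  set μ : Measure ℝ := volume.restrict (Ioi 0) with hμ
  set F : ℝ × ℝ → ℝ := fun p => Real.exp (-p.1) * (p.2 ^ (α-1) * Real.exp (-p.1 * p.2 ^ (2:ℝ)))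
    with hF
  have hmeas : AEStronglyMeasurable F (μ.prod μ) := by
    apply Measurable.aestronglyMeasurable
    exact (Real.measurable_exp.comp measurable_fst.neg).mul
      ((measurable_snd.pow_const _).mul
        (Real.measurable_exp.comp (measurable_fst.neg.mul (measurable_snd.pow_const _))))
  -- sections in t integrable for each s > 0
  have hsec : ∀ s ∈ Ioi (0:ℝ), IntegrableOn (fun t => F (s, t)) (Ioi 0) := by
    intro s hs
    simp only [hF]
    exact (integrableOn_rpow_mul_exp_neg_mul_rpow (p := 2) (s := α - 1) (b := s)
      (by linarith) two_pos hs).const_mul _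
  -- value of the t-section integral
  have hval : ∀ s ∈ Ioi (0:ℝ), ∫ t in Ioi (0:ℝ), F (s, t)
      = Real.exp (-s) * (s ^ (-(α/2)) * (1/2) * Real.Gamma (α/2)) := by
    intro s hs
    simp only [hF]
    rw [integral_const_mul, integral_rpow_mul_exp_neg_mul_rpow (p := 2) (q := α - 1) (b := s)
      (by norm_num) (by linarith) hs,
      show (-(α - 1 + 1) / 2 : ℝ) = -(α/2) by ring, show ((α - 1 + 1)/2 : ℝ) = α/2 by ring]
  -- nonnegativity of F on the region
  have hFnn : ∀ s ∈ Ioi (0:ℝ), ∀ t ∈ Ioi (0:ℝ), 0 ≤ F (s, t) := by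
    intro s _ t ht
    have : (0:ℝ) ≤ t ^ (α-1) := Real.rpow_nonneg (le_of_lt ht) _
    positivity
  -- integrability of s-marginal of norms
  have hnorm : Integrable (fun s => ∫ t, ‖F (s, t)‖ ∂μ) μ := by
    have hGint : IntegrableOn (fun s : ℝ => Real.exp (-s) * s ^ ((1 - α/2) - 1)) (Ioi 0) :=
      Real.GammaIntegral_convergent (by linarith)
    refine IntegrableOn.congr_fun (hGint.mul_const ((1/2) * Real.Gamma (α/2)))
      (fun s hs => ?_) measurableSet_Ioi
    have h1 : ∫ t, ‖F (s, t)‖ ∂μ = ∫ t, F (s, t) ∂μ :=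
      setIntegral_congr_fun measurableSet_Ioi (fun t ht => Real.norm_of_nonneg (hFnn s hs t ht))
    rw [h1, hval s hs, show ((1 - α/2) - 1 : ℝ) = -(α/2) by ring]
    ring
  have hF2 : Integrable F (μ.prod μ) := by
    rw [integrable_prod_iff hmeas]
    constructor
    · filter_upwards [self_mem_ae_restrict measurableSet_Ioi] with s hs
      exact hsec s hs
    · exact hnorm
  -- compute the s-section integral: for t > 0
  have hsint : ∀ t ∈ Ioi (0:ℝ), ∫ s in Ioi (0:ℝ), F (s, t) = t ^ (α-1) * (1+t^2)⁻¹ := by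
    intro t ht
    have h2 : t ^ (2:ℝ) = t ^ 2 := Real.rpow_two t
    have heq : ∀ s : ℝ, F (s, t) = t ^ (α-1) * Real.exp (-((1 + t^2) * s)) := by
      intro s
      simp only [hF, h2]
      rw [show -((1 + t^2) * s) = (-s) + (-s * t^2) by ring, Real.exp_add]
      ring
    simp_rw [heq]
    rw [integral_const_mul, int_exp_neg_mul _ (by positivity)]
    rw [one_div]
  -- Fubini
  have hswap : ∫ s, ∫ t, (fun s t => F (s, t)) s t ∂μ ∂μ
      = ∫ t, ∫ s, (fun s t => F (s, t)) s t ∂μ ∂μ :=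
    integral_integral_swap hF2
  -- marginal integrability in t
  have hmarg : Integrable (fun t => ∫ s, F (s, t) ∂μ) μ := hF2.integral_prod_right
  have hJint : IntegrableOn (fun t : ℝ => t ^ (α-1) * (1+t^2)⁻¹) (Ioi 0) := by
    refine hmarg.congr ?_
    filter_upwards [self_mem_ae_restrict measurableSet_Ioi] with t ht
    exact hsint t ht
  refine ⟨hJint, ?_⟩
  have e1 : ∫ t in Ioi (0:ℝ), t ^ (α-1) * (1+t^2)⁻¹ = ∫ t, ∫ s, F (s, t) ∂μ ∂μ := by
    refine setIntegral_congr_fun measurableSet_Ioi (fun t ht => ?_)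
    exact (hsint t ht).symm
  have e2 : ∫ s, ∫ t, F (s, t) ∂μ ∂μ
      = Real.Gamma (α/2) * Real.Gamma (1 - α/2) / 2 := by
    have : ∫ s, ∫ t, F (s, t) ∂μ ∂μ
        = ∫ s in Ioi (0:ℝ), Real.exp (-s) * (s ^ (-(α/2)) * (1/2) * Real.Gamma (α/2)) := by
      refine setIntegral_congr_fun measurableSet_Ioi (fun s hs => ?_)
      exact hval s hs
    rw [this]
    have hg : Real.Gamma (1 - α/2) = ∫ s in Ioi (0:ℝ), Real.exp (-s) * s ^ ((1 - α/2) - 1) :=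
      Real.Gamma_eq_integral (by linarith)
    have hrw : ∀ s : ℝ, Real.exp (-s) * (s ^ (-(α/2)) * (1/2) * Real.Gamma (α/2))
        = (Real.exp (-s) * s ^ ((1 - α/2) - 1)) * ((1/2) * Real.Gamma (α/2)) := by
      intro s
      have : ((1 - α/2) - 1 : ℝ) = -(α/2) := by ring
      rw [this]; ring
    simp_rw [hrw]
    rw [integral_mul_const, ← hg]
    ring
  rw [e1, ← hswap, e2]

/-- For `α ∈ (0,1)`, `(1/2)·∫_ℝ (1 − cos y)/|y|^(α+1) dy = Γ(1−α)·cos(πα/2)/α`. -/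
theorem stmt_3 (α : ℝ) (hα : 0 < α) (hα1 : α < 1) :
    (1 / 2) * ∫ y : ℝ, (1 - Real.cos y) / |y| ^ (α + 1)
      = Real.Gamma (1 - α) * Real.cos (π * α / 2) / α := by
  obtain ⟨hJint, hJval⟩ := lemJ α hα hα1
  set μ : Measure ℝ := volume.restrict (Ioi 0) with hμ
  -- the main Fubini: F (t, x) = t^α * ((1 - cos x) * exp (-(t*x)))
  set F : ℝ × ℝ → ℝ := fun p => p.1 ^ α * ((1 - Real.cos p.2) * Real.exp (-(p.1 * p.2)))
    with hF
  have hmeas : AEStronglyMeasurable F (μ.prod μ) := by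
    apply Measurable.aestronglyMeasurable
    exact (measurable_fst.pow_const α).mul
      ((measurable_const.sub (Real.measurable_cos.comp measurable_snd)).mul
        (Real.measurable_exp.comp (measurable_fst.mul measurable_snd).neg))
  have hFnn : ∀ t ∈ Ioi (0:ℝ), ∀ x ∈ Ioi (0:ℝ), 0 ≤ F (t, x) := by
    intro t ht x _
    have h1 : (0:ℝ) ≤ t ^ α := Real.rpow_nonneg (le_of_lt ht) _
    have h2 := Real.cos_le_one x
    exact mul_nonneg h1 (mul_nonneg (by linarith) (Real.exp_pos _).le)
  have hsec : ∀ t ∈ Ioi (0:ℝ), IntegrableOn (fun x => F (t, x)) (Ioi 0) := by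
    intro t ht
    simp only [hF]
    exact (lemA_int t ht).const_mul _
  have hval : ∀ t ∈ Ioi (0:ℝ), ∫ x in Ioi (0:ℝ), F (t, x) = t ^ (α-1) * (1+t^2)⁻¹ := by
    intro t ht
    simp only [hF]
    rw [integral_const_mul, lemA_val t ht]
    rw [Real.rpow_sub ht α 1, Real.rpow_one]
    field_simp
  have hnorm : Integrable (fun t => ∫ x, ‖F (t, x)‖ ∂μ) μ := by
    refine hJint.congr ?_
    filter_upwards [self_mem_ae_restrict measurableSet_Ioi] with t ht
    rw [← hval t ht]
    refine setIntegral_congr_fun measurableSet_Ioi (fun x hx => ?_)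
    exact (Real.norm_of_nonneg (hFnn t ht x hx)).symm
  have hF2 : Integrable F (μ.prod μ) := by
    rw [integrable_prod_iff hmeas]
    constructor
    · filter_upwards [self_mem_ae_restrict measurableSet_Ioi] with t ht
      exact hsec t ht
    · exact hnorm
  have hswap : ∫ t, ∫ x, (fun t x => F (t, x)) t x ∂μ ∂μ
      = ∫ x, ∫ t, (fun t x => F (t, x)) t x ∂μ ∂μ :=
    integral_integral_swap hF2
  -- inner t-integral for fixed x > 0
  have htint : ∀ x ∈ Ioi (0:ℝ), ∫ t in Ioi (0:ℝ), F (t, x)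
      = Real.Gamma (α+1) * ((1 - Real.cos x) / x ^ (α+1)) := by
    intro x hx
    have heq : ∀ t : ℝ, F (t, x) = ((1 - Real.cos x)) * (t ^ ((α+1)-1) * Real.exp (-(x * t))) := by
      intro t
      simp only [hF]
      have : ((α+1)-1 : ℝ) = α := by ring
      rw [this, mul_comm x t]
      ring
    simp_rw [heq]
    rw [integral_const_mul, integral_rpow_mul_exp_neg_mul_Ioi (by linarith) hx]
    rw [Real.div_rpow zero_le_one (le_of_lt hx), Real.one_rpow]
    field_simp
  -- conclude: J = Γ(α+1) * I
  have hIint : ∫ x in Ioi (0:ℝ), (1 - Real.cos x) / x ^ (α+1)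
      = (Real.Gamma (α/2) * Real.Gamma (1 - α/2) / 2) / Real.Gamma (α+1) := by
    have hΓpos : 0 < Real.Gamma (α+1) := Real.Gamma_pos_of_pos (by linarith)
    have e1 : ∫ t, ∫ x, F (t, x) ∂μ ∂μ = Real.Gamma (α/2) * Real.Gamma (1 - α/2) / 2 := by
      rw [← hJval]
      exact setIntegral_congr_fun measurableSet_Ioi (fun t ht => hval t ht)
    have e2 : ∫ x, ∫ t, F (t, x) ∂μ ∂μ
        = Real.Gamma (α+1) * ∫ x in Ioi (0:ℝ), (1 - Real.cos x) / x ^ (α+1) := by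
      rw [← integral_const_mul]
      exact setIntegral_congr_fun measurableSet_Ioi (fun x hx => htint x hx)
    have := hswap
    rw [e1, e2] at this
    field_simp at this ⊢
    linarith
  -- symmetrize
  have hsym : ∫ y : ℝ, (1 - Real.cos y) / |y| ^ (α + 1)
      = 2 * ∫ x in Ioi (0:ℝ), (1 - Real.cos x) / x ^ (α+1) := by
    have : (fun y : ℝ => (1 - Real.cos y) / |y| ^ (α + 1))
        = fun y : ℝ => (fun x : ℝ => (1 - Real.cos x) / x ^ (α+1)) |y| := by
      funext y
      simp [Real.cos_abs]
    rw [this]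
    exact integral_comp_abs (f := fun x : ℝ => (1 - Real.cos x) / x ^ (α+1))
  rw [hsym, hIint]
  -- final Gamma algebra
  have hπ := Real.pi_pos
  have hs1 : 0 < Real.sin (π * (α/2)) := by
    apply Real.sin_pos_of_pos_of_lt_pi
    · positivity
    · nlinarith
  have hc1 : 0 < Real.cos (π * α / 2) := by
    apply Real.cos_pos_of_mem_Ioo
    constructor
    · nlinarith
    · nlinarith
  have hs2 : Real.sin (π * α) = 2 * Real.sin (π * α / 2) * Real.cos (π * α / 2) := by
    rw [← Real.sin_two_mul]
    ring_nf
  have hΓα : 0 < Real.Gamma α := Real.Gamma_pos_of_pos hα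
  have refl1 : Real.Gamma (α/2) * Real.Gamma (1 - α/2) = π / Real.sin (π * (α/2)) :=
    Real.Gamma_mul_Gamma_one_sub (α/2)
  have refl2 : Real.Gamma α * Real.Gamma (1 - α) = π / Real.sin (π * α) :=
    Real.Gamma_mul_Gamma_one_sub α
  have hadd : Real.Gamma (α+1) = α * Real.Gamma α := Real.Gamma_add_one (ne_of_gt hα)
  have hG1 : Real.Gamma (1 - α) = π / Real.sin (π * α) / Real.Gamma α := by
    rw [eq_div_iff (ne_of_gt hΓα)]
    linear_combination refl2
  have hs1' : Real.sin (π * (α/2)) = Real.sin (π * α / 2) := by ring_nf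
  rw [refl1, hadd, hG1, hs2, hs1']
  have hsin : Real.sin (π * α / 2) ≠ 0 := by
    rw [← hs1']; exact ne_of_gt hs1
  have hcos : Real.cos (π * α / 2) ≠ 0 := ne_of_gt hc1
  field_simp
end

section
/- For α ∈ (0,1) and ξ ∈ ℝ with ξ ≠ 0, (α/Γ(1−α))·∫_0^∞ (e^{iξy} − 1)·y^(−α−1) dy = −(−iξ)^α, where (−iξ)^α = |ξ|^α·e^{−i(πα/2)·sgn(ξ)}. -/
open MeasureTheory Real Complex Set Filter Topology

namespace Stmt4Aux

/-- basic bound for `‖exp(-(z y)) - 1‖` when `Re z ≥ 0`, `y ≥ 0`. -/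
lemma norm_exp_neg_sub_one_le {z : ℂ} (hz : 0 ≤ z.re) {y : ℝ} (hy : 0 ≤ y) :
    ‖Complex.exp (-(z * y)) - 1‖ ≤ min 2 (2 * ‖z‖ * y) := by
  have hre : (-(z * (y : ℂ))).re = -(z.re * y) := by simp
  have h1 : ‖Complex.exp (-(z * y))‖ ≤ 1 := by
    rw [Complex.norm_exp, hre]
    exact Real.exp_le_one_iff.2 (by nlinarith)
  have h2 : ‖Complex.exp (-(z * y)) - 1‖ ≤ 2 := by
    calc ‖Complex.exp (-(z * y)) - 1‖ ≤ ‖Complex.exp (-(z * y))‖ + ‖(1 : ℂ)‖ := norm_sub_le _ _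
    _ ≤ 2 := by rw [norm_one]; linarith
  have habs : ‖-(z * y)‖ = ‖z‖ * y := by
    rw [norm_neg, norm_mul, Complex.norm_real, Real.norm_eq_abs, _root_.abs_of_nonneg hy]
  refine le_min h2 ?_
  rcases le_or_gt ‖-(z * y)‖ 1 with h | h
  · have := Complex.norm_exp_sub_one_le h
    rw [habs] at this
    calc ‖Complex.exp (-(z * y)) - 1‖ = ‖Complex.exp (-(z * y)) - 1‖ := rfl
    _ ≤ 2 * (‖z‖ * y) := this
    _ = 2 * ‖z‖ * y := by ring
  · rw [habs] at h; nlinarith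

lemma contOn_ofReal_rpow (r : ℝ) : ContinuousOn (fun y : ℝ => ((y ^ r : ℝ) : ℂ)) (Ioi 0) :=
  Complex.continuous_ofReal.comp_continuousOn
    (continuousOn_id.rpow_const fun _ hx => Or.inl (ne_of_gt hx))

lemma integrable_min_dominator {α : ℝ} (hα : 0 < α) (hα1 : α < 1) {c : ℝ} (hc : 0 ≤ c) :
    IntegrableOn (fun y : ℝ => min 2 (c * y) * y ^ (-α - 1)) (Ioi 0) := by
  have hmeas : ContinuousOn (fun y : ℝ => min 2 (c * y) * y ^ (-α - 1)) (Ioi 0) :=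
    ((continuous_const.min (continuous_const.mul continuous_id)).continuousOn).mul
      (continuousOn_id.rpow_const fun _ hx => Or.inl (ne_of_gt hx))
  rw [show Ioi (0 : ℝ) = Ioc 0 1 ∪ Ioi 1 from (Ioc_union_Ioi_eq_Ioi zero_le_one).symm]
  apply IntegrableOn.union
  · have hint : IntegrableOn (fun y : ℝ => c * y ^ (-α)) (Ioc 0 1) :=
      ((intervalIntegral.intervalIntegrable_rpow' (by linarith : (-1 : ℝ) < -α)).1).const_mul c
    refine Integrable.mono' hint ((hmeas.mono ?_).aestronglyMeasurable measurableSet_Ioc) ?_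
    · exact fun y hy => hy.1
    · filter_upwards [ae_restrict_mem measurableSet_Ioc] with y hy
      have hy0 : 0 < y := hy.1
      have hmin0 : 0 ≤ min 2 (c * y) := le_min (by norm_num) (by positivity)
      have hminle : min 2 (c * y) ≤ c * y := min_le_right _ _
      have hrp : 0 ≤ y ^ (-α - 1) := Real.rpow_nonneg hy0.le _
      rw [Real.norm_eq_abs, _root_.abs_of_nonneg (mul_nonneg hmin0 hrp)]
      calc min 2 (c * y) * y ^ (-α - 1) ≤ c * y * y ^ (-α - 1) :=
            mul_le_mul_of_nonneg_right hminle hrp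
      _ = c * y ^ (-α) := by
            rw [show (-α : ℝ) = 1 + (-α - 1) by ring, Real.rpow_add hy0, Real.rpow_one]; ring
  · have hint : IntegrableOn (fun y : ℝ => 2 * y ^ (-α - 1)) (Ioi 1) :=
      (integrableOn_Ioi_rpow_of_lt (by linarith) one_pos).const_mul 2
    refine Integrable.mono' hint ((hmeas.mono ?_).aestronglyMeasurable measurableSet_Ioi) ?_
    · exact fun y hy => mem_Ioi.2 (lt_trans one_pos hy)
    · filter_upwards [ae_restrict_mem measurableSet_Ioi] with y hy
      have hy0 : (0 : ℝ) < y := lt_trans one_pos hy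
      have hmin0 : 0 ≤ min 2 (c * y) := le_min (by norm_num) (by positivity)
      have hrp : 0 ≤ y ^ (-α - 1) := Real.rpow_nonneg hy0.le _
      rw [Real.norm_eq_abs, _root_.abs_of_nonneg (mul_nonneg hmin0 hrp)]
      exact mul_le_mul_of_nonneg_right (min_le_left _ _) hrp

lemma integrableF {α : ℝ} (hα : 0 < α) (hα1 : α < 1) {z : ℂ} (hz : 0 ≤ z.re) :
    IntegrableOn (fun y : ℝ => (Complex.exp (-(z * y)) - 1) * ((y ^ (-α - 1) : ℝ) : ℂ))
      (Ioi 0) := by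
  refine Integrable.mono' (integrable_min_dominator hα hα1 (c := 2 * ‖z‖) (by positivity)) ?_ ?_
  · refine ContinuousOn.aestronglyMeasurable ?_ measurableSet_Ioi
    exact (((Complex.continuous_exp.comp
        ((continuous_const.mul Complex.continuous_ofReal).neg)).sub
        continuous_const).continuousOn).mul (contOn_ofReal_rpow _)
  · filter_upwards [ae_restrict_mem measurableSet_Ioi] with y hy
    have hy0 : (0 : ℝ) < y := hy
    rw [norm_mul, Complex.norm_real, Real.norm_eq_abs,
      _root_.abs_of_nonneg (Real.rpow_nonneg hy0.le _)]
    exact mul_le_mul_of_nonneg_right (norm_exp_neg_sub_one_le hz hy0.le)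
      (Real.rpow_nonneg hy0.le _)

lemma integrableOn_exp_mul_rpow {δ r : ℝ} (hδ : 0 < δ) (hr : -1 < r) :
    IntegrableOn (fun y : ℝ => Real.exp (-(δ * y)) * y ^ r) (Ioi 0) := by
  have h0 : IntegrableOn (fun x : ℝ => Real.exp (-x) * x ^ r) (Ioi 0) := by
    simpa using Real.GammaIntegral_convergent (s := r + 1) (by linarith)
  have h2 : IntegrableOn (fun x : ℝ => Real.exp (-(δ * x)) * (δ * x) ^ r) (Ioi 0) := by
    have := (integrableOn_Ioi_comp_mul_left_iff
      (fun x : ℝ => Real.exp (-x) * x ^ r) 0 hδ).2 (by simpa using h0)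
    simpa using this
  have h3 : IntegrableOn (fun x : ℝ => δ ^ (-r) * (Real.exp (-(δ * x)) * (δ * x) ^ r))
      (Ioi 0) := h2.const_mul (δ ^ (-r))
  refine IntegrableOn.congr_fun h3 (fun x hx => ?_) measurableSet_Ioi
  have hx0 : (0 : ℝ) < x := hx
  have hδr : δ ^ r ≠ 0 := (Real.rpow_pos_of_pos hδ r).ne'
  rw [Real.mul_rpow hδ.le hx0.le, Real.rpow_neg hδ.le]
  field_simp

lemma integrableOn_cexp_mul_rpow {z : ℂ} (hz : 0 < z.re) {r : ℝ} (hr : -1 < r) :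
    IntegrableOn (fun y : ℝ => Complex.exp (-(z * y)) * ((y ^ r : ℝ) : ℂ)) (Ioi 0) := by
  refine Integrable.mono' (integrableOn_exp_mul_rpow hz hr) ?_ ?_
  · refine ContinuousOn.aestronglyMeasurable ?_ measurableSet_Ioi
    exact ((Complex.continuous_exp.comp
        ((continuous_const.mul Complex.continuous_ofReal).neg)).continuousOn).mul
      (contOn_ofReal_rpow _)
  · filter_upwards [ae_restrict_mem measurableSet_Ioi] with y hy
    have hy0 : (0 : ℝ) < y := hy
    rw [norm_mul, Complex.norm_exp, Complex.norm_real, Real.norm_eq_abs,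
      _root_.abs_of_nonneg (Real.rpow_nonneg hy0.le _)]
    have : (-(z * (y : ℂ))).re = -(z.re * y) := by simp
    rw [this]


lemma G_deriv {α : ℝ} (hα : 0 < α) (hα1 : α < 1) {z₀ : ℂ} (hz₀ : 0 < z₀.re) :
    HasDerivAt (fun z : ℂ => ∫ y in Ioi (0:ℝ), Complex.exp (-(z * y)) * ((y ^ (-α) : ℝ) : ℂ))
      (∫ y in Ioi (0:ℝ), Complex.exp (-(z₀ * y)) * (-(y:ℂ)) * ((y ^ (-α) : ℝ) : ℂ)) z₀ := by
  have hmeas : ∀ z : ℂ, AEStronglyMeasurable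
      (fun y : ℝ => Complex.exp (-(z * y)) * ((y ^ (-α) : ℝ) : ℂ))
      (volume.restrict (Ioi 0)) := by
    intro z
    refine ContinuousOn.aestronglyMeasurable ?_ measurableSet_Ioi
    exact ((Complex.continuous_exp.comp
        ((continuous_const.mul Complex.continuous_ofReal).neg)).continuousOn).mul
      (contOn_ofReal_rpow _)
  have hmeas' : AEStronglyMeasurable
      (fun y : ℝ => Complex.exp (-(z₀ * y)) * (-(y:ℂ)) * ((y ^ (-α) : ℝ) : ℂ))
      (volume.restrict (Ioi 0)) := by
    refine ContinuousOn.aestronglyMeasurable ?_ measurableSet_Ioi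
    exact (((Complex.continuous_exp.comp
        ((continuous_const.mul Complex.continuous_ofReal).neg)).mul
        (Complex.continuous_ofReal.neg)).continuousOn).mul (contOn_ofReal_rpow _)
  have key := hasDerivAt_integral_of_dominated_loc_of_deriv_le
    (μ := volume.restrict (Ioi (0:ℝ)))
    (F := fun (z : ℂ) (y : ℝ) => Complex.exp (-(z * y)) * ((y ^ (-α) : ℝ) : ℂ))
    (F' := fun (z : ℂ) (y : ℝ) => Complex.exp (-(z * y)) * (-(y:ℂ)) * ((y ^ (-α) : ℝ) : ℂ))
    (bound := fun y : ℝ => Real.exp (-(z₀.re / 2 * y)) * y ^ (1 - α))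
    (Metric.ball_mem_nhds z₀ (half_pos hz₀)) (Eventually.of_forall hmeas)
    (integrableOn_cexp_mul_rpow hz₀ (by linarith : (-1:ℝ) < -α)) hmeas' ?_
    (integrableOn_exp_mul_rpow (half_pos hz₀) (by linarith : (-1:ℝ) < 1 - α)) ?_
  · exact key.2
  · filter_upwards [ae_restrict_mem measurableSet_Ioi] with y hy z hzball
    have hy0 : (0 : ℝ) < y := hy
    have hzre : z₀.re / 2 ≤ z.re := by
      have h1 : |(z - z₀).re| ≤ ‖z - z₀‖ := Complex.abs_re_le_norm _
      have h2 : ‖z - z₀‖ < z₀.re / 2 := by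
        rwa [Metric.mem_ball, Complex.dist_eq] at hzball
      have := abs_le.1 h1
      simp only [Complex.sub_re] at this
      linarith [this.1]
    have hnorm : ‖Complex.exp (-(z * y)) * (-(y:ℂ)) * ((y ^ (-α) : ℝ) : ℂ)‖
        = Real.exp (-(z.re * y)) * y * y ^ (-α) := by
      rw [norm_mul, norm_mul, Complex.norm_exp,
        norm_neg, Complex.norm_real, Complex.norm_real, Real.norm_eq_abs, Real.norm_eq_abs,
        _root_.abs_of_nonneg hy0.le, _root_.abs_of_nonneg (Real.rpow_nonneg hy0.le _)]
      congr 1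
      · congr 1
        simp
    rw [hnorm]
    have h3 : y * y ^ (-α) = y ^ (1 - α) := by
      rw [show (1 - α : ℝ) = 1 + (-α) by ring, Real.rpow_add hy0, Real.rpow_one]
    rw [mul_assoc, h3]
    have h4 : Real.exp (-(z.re * y)) ≤ Real.exp (-(z₀.re / 2 * y)) := by
      apply Real.exp_le_exp.2
      nlinarith
    exact mul_le_mul_of_nonneg_right h4 (Real.rpow_nonneg hy0.le _)
  · filter_upwards [] with y z _
    have := (((hasDerivAt_id z).mul_const ((y:ℝ) : ℂ)).neg.cexp).mul_const
      (((y ^ (-α) : ℝ)) : ℂ)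
    simpa using this

lemma G_eq {α : ℝ} (hα : 0 < α) (hα1 : α < 1) {z : ℂ} (hz : 0 < z.re) :
    ∫ y in Ioi (0:ℝ), Complex.exp (-(z * y)) * ((y ^ (-α) : ℝ) : ℂ)
      = ((Real.Gamma (1 - α) : ℝ) : ℂ) * z ^ ((α : ℂ) - 1) := by
  set g : ℂ → ℂ := fun z => ∫ y in Ioi (0:ℝ), Complex.exp (-(z * y)) * ((y ^ (-α) : ℝ) : ℂ)
    with hg_def
  set h : ℂ → ℂ := fun z => ((Real.Gamma (1 - α) : ℝ) : ℂ) * z ^ ((α : ℂ) - 1) with hh_def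
  set U : Set ℂ := {w : ℂ | 0 < w.re} with hU_def
  have hUopen : IsOpen U := isOpen_lt continuous_const Complex.continuous_re
  have hg_an : AnalyticOnNhd ℂ g U := by
    refine DifferentiableOn.analyticOnNhd (fun w hw => ?_) hUopen
    exact (G_deriv hα hα1 hw).differentiableAt.differentiableWithinAt
  have hh_an : AnalyticOnNhd ℂ h U := by
    refine DifferentiableOn.analyticOnNhd (fun w hw => ?_) hUopen
    refine DifferentiableAt.differentiableWithinAt ?_
    exact ((hasDerivAt_id w).cpow_const
      (Complex.mem_slitPlane_iff.2 (Or.inl hw))).differentiableAt.const_mul _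
  have gx_eq : ∀ x : ℝ, 0 < x → g x = h x := by
    intro x hx
    have hxne : (x : ℂ) ≠ 0 := Complex.ofReal_ne_zero.2 hx.ne'
    have h1 := integral_cpow_mul_exp_neg_mul_Ioi
      (a := 1 - (α : ℂ)) (r := x) (by simp [hα1]) hx
    have h2 : g x = ∫ t in Ioi (0:ℝ), (t : ℂ) ^ (1 - (α:ℂ) - 1) * Complex.exp (-(x * t)) := by
      rw [hg_def]
      refine setIntegral_congr_fun measurableSet_Ioi (fun y hy => ?_)
      have hy0 : (0 : ℝ) < y := hy
      rw [Complex.ofReal_cpow hy0.le, Complex.ofReal_neg,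
        show (1 - (α:ℂ) - 1) = -(α:ℂ) by ring]
      ring
    rw [h2, h1, hh_def]
    have harg : (x : ℂ).arg ≠ π := by
      rw [Complex.arg_ofReal_of_nonneg hx.le]
      exact Real.pi_ne_zero.symm
    rw [one_div, Complex.inv_cpow _ _ harg, ← Complex.cpow_neg]
    have hgam : Complex.Gamma (1 - (α:ℂ)) = ((Real.Gamma (1 - α) : ℝ) : ℂ) := by
      rw [show (1 - (α:ℂ)) = ((1 - α : ℝ) : ℂ) by push_cast; ring, Complex.Gamma_ofReal]
    rw [hgam, show -(1 - (α:ℂ)) = (α:ℂ) - 1 by ring]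
    ring
  have hfreq : ∃ᶠ w in 𝓝[≠] (1 : ℂ), g w = h w := by
    have hseq : Tendsto (fun n : ℕ => (((1 + ((n:ℝ)+1)⁻¹ : ℝ)) : ℂ)) atTop (𝓝[≠] (1 : ℂ)) := by
      apply tendsto_nhdsWithin_of_tendsto_nhds_of_eventually_within
      · have hr : Tendsto (fun n : ℕ => (1 + ((n:ℝ)+1)⁻¹ : ℝ)) atTop (𝓝 1) := by
          have := tendsto_one_div_add_atTop_nhds_zero_nat (𝕜 := ℝ)
          simp only [one_div] at this
          simpa using tendsto_const_nhds.add this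
        have := (Complex.continuous_ofReal.tendsto 1).comp hr
        exact this.congr fun n => by simp [Function.comp]
      · filter_upwards [] with n
        simp only [mem_compl_iff, mem_singleton_iff]
        intro hcon
        have : (1 + ((n:ℝ)+1)⁻¹ : ℝ) = 1 := by exact_mod_cast hcon
        have hpos : (0:ℝ) < ((n:ℝ)+1)⁻¹ := by positivity
        linarith
    refine hseq.frequently (Eventually.of_forall (fun n => ?_)).frequently
    exact gx_eq _ (by positivity)
  have := hg_an.eqOn_of_preconnected_of_frequently_eq hh_an
    (convex_halfSpace_re_gt (0:ℝ)).isPreconnected (by simp [hU_def] : (1:ℂ) ∈ U) hfreq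
  exact this hz

lemma I_eq {α : ℝ} (hα : 0 < α) (hα1 : α < 1) {z : ℂ} (hz : 0 < z.re) :
    ∫ y in Ioi (0:ℝ), (Complex.exp (-(z * y)) - 1) * ((y ^ (-α - 1) : ℝ) : ℂ)
      = -(((Real.Gamma (1 - α) : ℝ) : ℂ) / α) * z ^ (α : ℂ) := by
  have hαC : ((α : ℝ) : ℂ) ≠ 0 := Complex.ofReal_ne_zero.2 hα.ne'
  have hzne : z ≠ 0 := fun h => by rw [h] at hz; simp at hz
  set f : ℝ → ℂ := fun y =>
    (Complex.exp (-(z * y)) - 1) * ((y ^ (-α) : ℝ) : ℂ) * (-(α : ℂ))⁻¹ with hf_def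
  set f' : ℝ → ℂ := fun y =>
    (z * ((α : ℂ))⁻¹) * (Complex.exp (-(z * y)) * ((y ^ (-α) : ℝ) : ℂ))
      + (Complex.exp (-(z * y)) - 1) * ((y ^ (-α - 1) : ℝ) : ℂ) with hf'_def
  have hderiv : ∀ y ∈ Ioi (0:ℝ), HasDerivAt f (f' y) y := by
    intro y hy
    have hy0 : (0:ℝ) < y := hy
    have hE : HasDerivAt (fun t : ℝ => Complex.exp (-(z * ↑t)))
        (Complex.exp (-(z * ↑y)) * (-z)) y := by
      have h1 : HasDerivAt (fun w : ℂ => Complex.exp (-(z * w)))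
          (Complex.exp (-(z * ↑y)) * (-z)) ↑y := by
        have := (((hasDerivAt_id ((y:ℝ):ℂ)).const_mul z).neg).cexp
        simpa using this
      exact h1.comp_ofReal
    have hr : HasDerivAt (fun t : ℝ => ((t ^ (-α) : ℝ) : ℂ))
        (((-α * y ^ (-α - 1) : ℝ)) : ℂ) y :=
      (Real.hasDerivAt_rpow_const (Or.inl hy0.ne')).ofReal_comp
    have := ((hE.sub_const 1).mul hr).mul_const (-(α : ℂ))⁻¹
    refine this.congr_deriv ?_
    symm
    rw [hf'_def, inv_neg, Complex.ofReal_mul, Complex.ofReal_neg]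
    linear_combination (-(Complex.exp (-(z * ↑y)) - 1) * ((y ^ (-α - 1) : ℝ) : ℂ)) *
      (mul_inv_cancel₀ hαC)
  have hcont : ContinuousWithinAt f (Ici (0:ℝ)) 0 := by
    have hf0 : f 0 = 0 := by simp [hf_def]
    rw [ContinuousWithinAt, hf0]
    apply squeeze_zero_norm' (a := fun y => 2 * ‖z‖ * α⁻¹ * y ^ (1 - α))
    · filter_upwards [eventually_mem_nhdsWithin] with y (hy : y ∈ Ici (0:ℝ))
      have hy0 : (0:ℝ) ≤ y := hy
      have h1 : ‖Complex.exp (-(z * y)) - 1‖ ≤ 2 * ‖z‖ * y :=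
        le_trans (norm_exp_neg_sub_one_le hz.le hy0) (min_le_right _ _)
      have h2 : ‖f y‖ = ‖Complex.exp (-(z * y)) - 1‖ * y ^ (-α) * α⁻¹ := by
        rw [hf_def]
        simp only [norm_mul, norm_inv, norm_neg, Complex.norm_real, Real.norm_eq_abs]
        rw [_root_.abs_of_nonneg (Real.rpow_nonneg hy0 _), _root_.abs_of_nonneg hα.le]
      rw [h2]
      have h3 : y ^ (1 - α) = y * y ^ (-α) := by
        rw [show (1 - α : ℝ) = 1 + (-α) by ring, Real.rpow_add' hy0 (by linarith),
          Real.rpow_one]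
      rw [h3]
      have hrp : (0:ℝ) ≤ y ^ (-α) := Real.rpow_nonneg hy0 _
      have hinv : (0:ℝ) ≤ α⁻¹ := by positivity
      calc ‖Complex.exp (-(z * y)) - 1‖ * y ^ (-α) * α⁻¹
          ≤ 2 * ‖z‖ * y * y ^ (-α) * α⁻¹ := by
            apply mul_le_mul_of_nonneg_right (mul_le_mul_of_nonneg_right h1 hrp) hinv
      _ = 2 * ‖z‖ * α⁻¹ * (y * y ^ (-α)) := by ring
    · have hc : ContinuousAt (fun y : ℝ => y ^ (1 - α)) 0 :=
        Real.continuousAt_rpow_const 0 (1 - α) (Or.inr (by linarith))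
      have h0 : (0:ℝ) ^ (1 - α) = 0 := Real.zero_rpow (by linarith)
      have h1 : Tendsto (fun y : ℝ => 2 * ‖z‖ * α⁻¹ * y ^ (1 - α)) (𝓝[Ici (0:ℝ)] 0)
          (𝓝 (2 * ‖z‖ * α⁻¹ * (0:ℝ) ^ (1 - α))) :=
        (hc.tendsto.mono_left nhdsWithin_le_nhds).const_mul _
      rwa [h0, mul_zero] at h1
  have htop : Tendsto f atTop (𝓝 0) := by
    apply squeeze_zero_norm' (a := fun y => 2 * α⁻¹ * y ^ (-α))
    · filter_upwards [eventually_ge_atTop (0:ℝ)] with y hy0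
      have h1 : ‖Complex.exp (-(z * y)) - 1‖ ≤ 2 :=
        le_trans (norm_exp_neg_sub_one_le hz.le hy0) (min_le_left _ _)
      have h2 : ‖f y‖ = ‖Complex.exp (-(z * y)) - 1‖ * y ^ (-α) * α⁻¹ := by
        rw [hf_def]
        simp only [norm_mul, norm_inv, norm_neg, Complex.norm_real, Real.norm_eq_abs]
        rw [_root_.abs_of_nonneg (Real.rpow_nonneg hy0 _), _root_.abs_of_nonneg hα.le]
      rw [h2]
      have hrp : (0:ℝ) ≤ y ^ (-α) := Real.rpow_nonneg hy0 _
      have hinv : (0:ℝ) ≤ α⁻¹ := by positivity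
      calc ‖Complex.exp (-(z * y)) - 1‖ * y ^ (-α) * α⁻¹
          ≤ 2 * y ^ (-α) * α⁻¹ := by
            apply mul_le_mul_of_nonneg_right (mul_le_mul_of_nonneg_right h1 hrp) hinv
      _ = 2 * α⁻¹ * y ^ (-α) := by ring
    · have := (tendsto_rpow_neg_atTop hα).const_mul (2 * α⁻¹)
      rwa [mul_zero] at this
  have hint1 : IntegrableOn (fun y : ℝ =>
      Complex.exp (-(z * y)) * ((y ^ (-α) : ℝ) : ℂ)) (Ioi 0) :=
    integrableOn_cexp_mul_rpow hz (by linarith : (-1:ℝ) < -α)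
  have hint2 : IntegrableOn (fun y : ℝ =>
      (Complex.exp (-(z * y)) - 1) * ((y ^ (-α - 1) : ℝ) : ℂ)) (Ioi 0) :=
    integrableF hα hα1 hz.le
  have f'int : IntegrableOn f' (Ioi 0) := (hint1.const_mul _).add hint2
  have key := integral_Ioi_of_hasDerivAt_of_tendsto hcont hderiv f'int htop
  have hf0 : f 0 = 0 := by simp [hf_def]
  rw [hf0, sub_zero] at key
  have hsplit : (z * ((α : ℂ))⁻¹) * (∫ y in Ioi (0:ℝ),
          Complex.exp (-(z * y)) * ((y ^ (-α) : ℝ) : ℂ))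
        + (∫ y in Ioi (0:ℝ), (Complex.exp (-(z * y)) - 1) * ((y ^ (-α - 1) : ℝ) : ℂ)) = 0 := by
    rw [← integral_const_mul, ← integral_add (hint1.const_mul _) hint2]
    exact key
  rw [G_eq hα hα1 hz] at hsplit
  have hcpow : z ^ ((α:ℂ)) = z * z ^ ((α:ℂ) - 1) := by
    conv_lhs => rw [show (α:ℂ) = 1 + ((α:ℂ) - 1) by ring]
    rw [Complex.cpow_add _ _ hzne, Complex.cpow_one]
  have : ∫ y in Ioi (0:ℝ), (Complex.exp (-(z * y)) - 1) * ((y ^ (-α - 1) : ℝ) : ℂ)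
      = -(z * ((α : ℂ))⁻¹ * (((Real.Gamma (1 - α) : ℝ) : ℂ) * z ^ ((α:ℂ) - 1))) := by
    linear_combination hsplit
  rw [this, hcpow, div_eq_mul_inv]
  ring

lemma cpow_val {ξ : ℝ} (hξ : ξ ≠ 0) (α : ℝ) :
    (-(Complex.I * ξ)) ^ (α : ℂ)
      = ((|ξ| ^ α : ℝ) : ℂ) *
          Complex.exp (-Complex.I * (π * α / 2) * ((Real.sign ξ : ℝ) : ℂ)) := by
  have hne : (-(Complex.I * ξ)) ≠ 0 := by
    simp only [ne_eq, neg_eq_zero, mul_eq_zero, Complex.I_ne_zero, false_or]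
    exact Complex.ofReal_ne_zero.2 hξ
  have habs : ‖-(Complex.I * ξ)‖ = |ξ| := by
    rw [norm_neg, norm_mul, Complex.norm_I, Complex.norm_real, Real.norm_eq_abs, one_mul]
  have hrpow : ((|ξ| ^ α : ℝ) : ℂ) = Complex.exp (((Real.log |ξ| * α : ℝ)) : ℂ) := by
    rw [Real.rpow_def_of_pos (abs_pos.2 hξ), Complex.ofReal_exp]
  rw [Complex.cpow_def_of_ne_zero hne, hrpow, ← Complex.exp_add]
  rcases hξ.lt_or_gt with hneg | hpos
  · have harg : (-(Complex.I * ξ)).arg = π / 2 := by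
      rw [show (-(Complex.I * (ξ:ℂ))) = ((-ξ : ℝ) : ℂ) * Complex.I by push_cast; ring,
        Complex.arg_real_mul _ (by linarith : (0:ℝ) < -ξ), Complex.arg_I]
    have hlog : Complex.log (-(Complex.I * ξ))
        = ((Real.log |ξ| : ℝ) : ℂ) + ((π / 2 : ℝ) : ℂ) * Complex.I := by
      simp only [Complex.log, habs, harg]
    rw [hlog, Real.sign_of_neg hneg]
    congr 1
    push_cast
    ring
  · have harg : (-(Complex.I * ξ)).arg = -(π / 2) := by
      rw [show (-(Complex.I * (ξ:ℂ))) = ((ξ : ℝ) : ℂ) * (-Complex.I) by ring,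
        Complex.arg_real_mul _ hpos, Complex.arg_neg_I]
    have hlog : Complex.log (-(Complex.I * ξ))
        = ((Real.log |ξ| : ℝ) : ℂ) + ((-(π / 2) : ℝ) : ℂ) * Complex.I := by
      simp only [Complex.log, habs, harg]
    rw [hlog, Real.sign_of_pos hpos]
    congr 1
    push_cast
    ring

end Stmt4Aux

open Stmt4Aux in
/-- For `α ∈ (0,1)` and `ξ ≠ 0`,
`(α/Γ(1−α))·∫_0^∞ (e^{iξy} − 1)·y^(−α−1) dy = −(−iξ)^α`, where
`(−iξ)^α = |ξ|^α·e^{−i(πα/2)·sgn ξ}`. -/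
theorem stmt_4 (α ξ : ℝ) (hα : 0 < α) (hα1 : α < 1) (hξ : ξ ≠ 0) :
    ((α / Real.Gamma (1 - α) : ℝ) : ℂ) *
        ∫ y in Set.Ioi (0 : ℝ),
          (Complex.exp (Complex.I * ξ * y) - 1) * ((y ^ (-α - 1) : ℝ) : ℂ)
      = -(((|ξ| ^ α : ℝ) : ℂ) *
          Complex.exp (-Complex.I * (π * α / 2) * (Real.sign ξ : ℝ))) := by
  have hΓ : Real.Gamma (1 - α) ≠ 0 := (Real.Gamma_pos_of_pos (by linarith)).ne'
  set w : ℂ := -(Complex.I * ξ) with hw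
  set zseq : ℕ → ℂ := fun n => ((((n:ℝ) + 1)⁻¹ : ℝ) : ℂ) + w with hzseq
  have hzre : ∀ n, (zseq n).re = ((n:ℝ) + 1)⁻¹ := by
    intro n
    show (((((n:ℝ) + 1)⁻¹ : ℝ) : ℂ) + w).re = ((n:ℝ) + 1)⁻¹
    rw [Complex.add_re, Complex.ofReal_re, hw]
    simp
  have hzpos : ∀ n, 0 < (zseq n).re := fun n => by
    rw [hzre]; positivity
  have hwnorm : ‖w‖ = |ξ| := by
    rw [hw, norm_neg, norm_mul, Complex.norm_I, Complex.norm_real, Real.norm_eq_abs, one_mul]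
  have hznorm : ∀ n, ‖zseq n‖ ≤ 1 + |ξ| := by
    intro n
    calc ‖zseq n‖ ≤ ‖((((n:ℝ) + 1)⁻¹ : ℝ) : ℂ)‖ + ‖w‖ := norm_add_le _ _
    _ ≤ 1 + |ξ| := by
        rw [hwnorm, Complex.norm_real, Real.norm_eq_abs]
        have h1 : (1:ℝ) ≤ (n:ℝ) + 1 := by linarith [(n.cast_nonneg : (0:ℝ) ≤ n)]
        have h2 : |((n:ℝ) + 1)⁻¹| ≤ 1 := by
          rw [_root_.abs_of_nonneg (by positivity : (0:ℝ) ≤ ((n:ℝ)+1)⁻¹)]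
          rw [inv_le_one_iff₀]
          right; linarith
        linarith
  have hztend : Tendsto zseq atTop (𝓝 w) := by
    have h0 : Tendsto (fun n : ℕ => (((n:ℝ) + 1)⁻¹ : ℝ)) atTop (𝓝 0) := by
      have := tendsto_one_div_add_atTop_nhds_zero_nat (𝕜 := ℝ)
      simpa [one_div] using this
    have h1 := ((Complex.continuous_ofReal.tendsto 0).comp h0).add_const w
    rw [hzseq]
    simpa using h1
  have hmeas : ∀ z : ℂ, AEStronglyMeasurable
      (fun y : ℝ => (Complex.exp (-(z * y)) - 1) * ((y ^ (-α - 1) : ℝ) : ℂ))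
      (volume.restrict (Ioi 0)) := by
    intro z
    refine ContinuousOn.aestronglyMeasurable ?_ measurableSet_Ioi
    exact (((Complex.continuous_exp.comp
        ((continuous_const.mul Complex.continuous_ofReal).neg)).sub
        continuous_const).continuousOn).mul (contOn_ofReal_rpow _)
  have hlim : Tendsto
      (fun n => ∫ y in Ioi (0:ℝ),
        (Complex.exp (-(zseq n * y)) - 1) * ((y ^ (-α - 1) : ℝ) : ℂ)) atTop
      (𝓝 (∫ y in Ioi (0:ℝ),
        (Complex.exp (-(w * y)) - 1) * ((y ^ (-α - 1) : ℝ) : ℂ))) := by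
    refine tendsto_integral_of_dominated_convergence
      (fun y => min 2 (2 * (1 + |ξ|) * y) * y ^ (-α - 1)) (fun n => hmeas _)
      (integrable_min_dominator hα hα1 (by positivity)) (fun n => ?_) ?_
    · filter_upwards [ae_restrict_mem measurableSet_Ioi] with y hy
      have hy0 : (0:ℝ) < y := hy
      have h1 : ‖Complex.exp (-(zseq n * y)) - 1‖ ≤ min 2 (2 * ‖zseq n‖ * y) :=
        norm_exp_neg_sub_one_le (hzpos n).le hy0.le
      have h2 : min 2 (2 * ‖zseq n‖ * y) ≤ min 2 (2 * (1 + |ξ|) * y) := by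
        refine min_le_min le_rfl ?_
        have := hznorm n
        nlinarith [norm_nonneg (zseq n)]
      rw [norm_mul, Complex.norm_real, Real.norm_eq_abs,
        _root_.abs_of_nonneg (Real.rpow_nonneg hy0.le _)]
      exact mul_le_mul_of_nonneg_right (h1.trans h2) (Real.rpow_nonneg hy0.le _)
    · filter_upwards [ae_restrict_mem measurableSet_Ioi] with y _
      have hc : Continuous fun z : ℂ =>
          (Complex.exp (-(z * y)) - 1) * ((y ^ (-α - 1) : ℝ) : ℂ) :=
        ((Complex.continuous_exp.comp
          ((continuous_id.mul continuous_const).neg)).sub continuous_const).mul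
          continuous_const
      exact (hc.tendsto w).comp hztend
  have hlim' : Tendsto
      (fun n => -(((Real.Gamma (1 - α) : ℝ) : ℂ) / α) * zseq n ^ (α : ℂ)) atTop
      (𝓝 (∫ y in Ioi (0:ℝ),
        (Complex.exp (-(w * y)) - 1) * ((y ^ (-α - 1) : ℝ) : ℂ))) :=
    hlim.congr fun n => I_eq hα hα1 (hzpos n)
  have hlim2 : Tendsto
      (fun n => -(((Real.Gamma (1 - α) : ℝ) : ℂ) / α) * zseq n ^ (α : ℂ)) atTop
      (𝓝 (-(((Real.Gamma (1 - α) : ℝ) : ℂ) / α) * w ^ (α : ℂ))) := by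
    have hc : ContinuousAt (fun z : ℂ => z ^ (α : ℂ)) w := by
      apply continuousAt_cpow_const
      rw [Complex.mem_slitPlane_iff]
      right
      simp [hw, hξ]
    exact (hc.tendsto.comp hztend).const_mul _
  have hkey : ∫ y in Ioi (0:ℝ), (Complex.exp (-(w * y)) - 1) * ((y ^ (-α - 1) : ℝ) : ℂ)
      = -(((Real.Gamma (1 - α) : ℝ) : ℂ) / α) * w ^ (α : ℂ) :=
    tendsto_nhds_unique hlim' hlim2
  have hintegrand : ∀ y : ℝ, Complex.I * ξ * y = -(w * y) := fun y => by
    rw [hw]; ring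
  simp only [hintegrand]
  rw [hkey, hw, cpow_val hξ α]
  have hαC : ((α : ℝ) : ℂ) ≠ 0 := Complex.ofReal_ne_zero.2 hα.ne'
  have hΓC : ((Real.Gamma (1 - α) : ℝ) : ℂ) ≠ 0 := Complex.ofReal_ne_zero.2 hΓ
  push_cast
  field_simp
end
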